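/- Let A ⊆ H^n, suppose S in the real span of A has maximal rank among all elements of the real span of A, and suppose A is SDC. Then the range of every A ∈ A is contained in the range of S. -/

import Mathlib

open Matrix

/-- If `S` is a max-rank element of the real span of an SDC set `𝒜` of Hermitian
matrices, then the range of every `A ∈ 𝒜` is contained in the range of `S`. -/
theorem range_le_range_of_maxRank_of_sdc
    {n : ℕ} (𝒜 : Set (Matrix (Fin n) (Fin n) ℂ))
    (hherm : ∀ A ∈ 𝒜, A.IsHermitian)
    (S : Matrix (Fin n) (Fin n) ℂ) (hSmem : S ∈ Submodule.span ℝ 𝒜)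
    (hSmax : ∀ T ∈ Submodule.span ℝ 𝒜, T.rank ≤ S.rank)
    (P : Matrix (Fin n) (Fin n) ℂ) (hP : IsUnit P)
    (hdiag : ∀ A ∈ 𝒜, (Pᴴ * A * P).IsDiag) :
    ∀ A ∈ 𝒜, LinearMap.range A.mulVecLin ≤ LinearMap.range S.mulVecLin := by
  classical
  intro A hA
  have hPdet : IsUnit P.det := P.isUnit_iff_isUnit_det.mp hP
  have hPH : IsUnit Pᴴ := by rw [← Matrix.star_eq_conjTranspose]; exact hP.star
  have hPHdet : IsUnit Pᴴ.det := Pᴴ.isUnit_iff_isUnit_det.mp hPH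
  -- every element of the span becomes diagonal after conjugation
  have hdiag' : ∀ T ∈ Submodule.span ℝ 𝒜, (Pᴴ * T * P).IsDiag := by
    intro T hT
    induction hT using Submodule.span_induction with
    | mem B hB => exact hdiag B hB
    | zero => simp only [Matrix.mul_zero, Matrix.zero_mul]; exact Matrix.isDiag_zero
    | add B C _ _ h1 h2 =>
        have : Pᴴ * (B + C) * P = Pᴴ * B * P + Pᴴ * C * P := by
          rw [Matrix.mul_add, Matrix.add_mul]
        rw [this]; exact h1.add h2
    | smul c B _ h =>
        have : Pᴴ * (c • B) * P = c • (Pᴴ * B * P) := by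
          rw [Matrix.mul_smul, Matrix.smul_mul]
        rw [this]; exact h.smul c
  -- every element of the span is Hermitian
  have hherm' : ∀ T ∈ Submodule.span ℝ 𝒜, T.IsHermitian := by
    intro T hT
    induction hT using Submodule.span_induction with
    | mem B hB => exact hherm B hB
    | zero => exact isHermitian_zero
    | add B C _ _ h1 h2 => exact h1.add h2
    | smul c B _ h =>
        rw [Matrix.IsHermitian, Matrix.conjTranspose_smul, star_trivial, h.eq]
  -- rank formula for elements of the span
  have hrank : ∀ T ∈ Submodule.span ℝ 𝒜,
      T.rank = Fintype.card {i // (Pᴴ * T * P) i i ≠ 0} := by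
    intro T hT
    have h1 : (Pᴴ * T * P).rank = T.rank := by
      rw [Matrix.rank_mul_eq_left_of_isUnit_det _ _ hPdet,
        Matrix.rank_mul_eq_right_of_isUnit_det _ _ hPHdet]
    have h2 : diagonal (Pᴴ * T * P).diag = Pᴴ * T * P := (hdiag' T hT).diagonal_diag
    rw [← h1, ← h2, Matrix.rank_diagonal]
    exact Fintype.card_congr (Equiv.subtypeEquivRight fun i => by
      simp [Matrix.diagonal_apply_eq, Matrix.diag])
  -- diagonal entries are real
  have hre : ∀ T ∈ Submodule.span ℝ 𝒜, ∀ i,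
      ((((Pᴴ * T * P) i i).re : ℂ)) = (Pᴴ * T * P) i i := by
    intro T hT i
    have h := Matrix.isHermitian_conjTranspose_mul_mul P (hherm' T hT)
    have h2 : ((Pᴴ * T * P)ᴴ) i i = (Pᴴ * T * P) i i := by rw [h.eq]
    rw [Matrix.conjTranspose_apply] at h2
    exact Complex.conj_eq_iff_re.mp h2
  have hAspan : A ∈ Submodule.span ℝ 𝒜 := Submodule.subset_span hA
  set DS : Matrix (Fin n) (Fin n) ℂ := Pᴴ * S * P with hDS
  set DA : Matrix (Fin n) (Fin n) ℂ := Pᴴ * A * P with hDA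
  -- the key support inclusion
  have hsupp : ∀ i, DS i i = 0 → DA i i = 0 := by
    by_contra h
    push_neg at h
    obtain ⟨i0, hS0, hA0⟩ := h
    obtain ⟨t, ht⟩ := Infinite.exists_notMem_finset
      (insert (0 : ℝ) (Finset.univ.image fun i => -((DS i i).re / (DA i i).re)))
    have ht0 : t ≠ 0 := fun h0 => ht (by simp [h0])
    have htim : ∀ i, t ≠ -((DS i i).re / (DA i i).re) := by
      intro i hti
      exact ht (Finset.mem_insert_of_mem (Finset.mem_image.mpr ⟨i, Finset.mem_univ i, hti.symm⟩))
    set T : Matrix (Fin n) (Fin n) ℂ := S + t • A with hTdef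
    have hTmem : T ∈ Submodule.span ℝ 𝒜 :=
      Submodule.add_mem _ hSmem (Submodule.smul_mem _ t hAspan)
    have hDT : ∀ i, (Pᴴ * T * P) i i = DS i i + (t : ℂ) * DA i i := by
      intro i
      have : Pᴴ * T * P = DS + t • DA := by
        rw [hTdef, Matrix.mul_add, Matrix.add_mul, Matrix.mul_smul, Matrix.smul_mul]
      rw [this, Matrix.add_apply, Matrix.smul_apply, Complex.real_smul]
    -- nonvanishing of the new diagonal wherever DS is nonzero
    have hne : ∀ i, DS i i ≠ 0 → (Pᴴ * T * P) i i ≠ 0 := by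
      intro i hi
      rw [hDT i]
      by_cases hAi : DA i i = 0
      · simpa [hAi] using hi
      · intro hzero
        have hSre : ((DS i i).re : ℂ) = DS i i := hre S hSmem i
        have hAre : ((DA i i).re : ℂ) = DA i i := hre A hAspan i
        have hAre0 : (DA i i).re ≠ 0 := by
          intro h0; apply hAi; rw [← hAre, h0, Complex.ofReal_zero]
        have : (((DS i i).re + t * (DA i i).re : ℝ) : ℂ) = 0 := by
          push_cast
          rw [hSre, hAre]; exact hzero
        have hr : (DS i i).re + t * (DA i i).re = 0 := by exact_mod_cast this
        have : t = -((DS i i).re / (DA i i).re) := by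
          field_simp
          linarith [hr]
        exact htim i this
    have hne0 : (Pᴴ * T * P) i0 i0 ≠ 0 := by
      rw [hDT i0, hS0, zero_add]
      exact mul_ne_zero (by exact_mod_cast ht0) hA0
    -- cardinality comparison
    have hsub : (Finset.univ.filter fun i => DS i i ≠ 0) ⊂
        (Finset.univ.filter fun i => (Pᴴ * T * P) i i ≠ 0) := by
      constructor
      · intro i hi
        rw [Finset.mem_filter] at hi ⊢
        exact ⟨Finset.mem_univ i, hne i hi.2⟩
      · intro hcon
        have := hcon (Finset.mem_filter.mpr ⟨Finset.mem_univ i0, hne0⟩)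
        rw [Finset.mem_filter] at this
        exact this.2 hS0
    have hlt : S.rank < T.rank := by
      rw [hrank S hSmem, hrank T hTmem, Fintype.card_subtype, Fintype.card_subtype]
      exact Finset.card_lt_card hsub
    exact absurd (hSmax T hTmem) (not_le.mpr hlt)
  -- build the factor E
  set E : Matrix (Fin n) (Fin n) ℂ :=
    diagonal (fun i => if DS i i = 0 then 0 else DA i i / DS i i) with hE
  have hfac : DA = DS * E := by
    have hDAd : diagonal DA.diag = DA := (hdiag' A hAspan).diagonal_diag
    have hDSd : diagonal DS.diag = DS := (hdiag' S hSmem).diagonal_diag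
    rw [← hDAd, ← hDSd, hE, Matrix.diagonal_mul_diagonal]
    refine congrArg Matrix.diagonal (funext fun i => ?_)
    show DA i i = DS i i * _
    by_cases hi : DS i i = 0
    · simp [hi, hsupp i hi]
    · rw [if_neg hi, mul_div_assoc', mul_comm, mul_div_assoc, div_self hi, mul_one]
  -- A = S * (P * E * P⁻¹)
  have hAeq : A = S * (P * E * P⁻¹) := by
    have hPinv : P⁻¹ * P = 1 := Matrix.nonsing_inv_mul P hPdet
    have key : Pᴴ * A * P = Pᴴ * (S * (P * E * P⁻¹)) * P := by
      have h3 : Pᴴ * (S * (P * E * P⁻¹)) * P = Pᴴ * S * P * (E * (P⁻¹ * P)) := by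
        simp only [Matrix.mul_assoc]
      rw [h3, hPinv, Matrix.mul_one]
      exact hfac
    have h1 : Pᴴ * A = Pᴴ * (S * (P * E * P⁻¹)) := hP.mul_right_cancel key
    exact hPH.mul_left_cancel h1
  rw [hAeq, Matrix.mulVecLin_mul]
  exact LinearMap.range_comp_le_range _ _
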